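/- Fix ν > 0 and a_s ∈ (0,1) with a_w = 1 − a_s. For any nonnegative random variable g with P(g > 0) = 1, lim_{ρ → ∞} −(1/ν) log₂ E[((1 + ρ g)/(1 + a_s ρ g))^{−ν}] = log₂(1 + a_w/a_s) = log₂(1/a_s). -/

import Mathlib

open MeasureTheory Real Filter

/-- High-SNR limit of the weak user's effective rate in downlink NOMA:
`R_w(ρ) → log₂(1 + a_w/a_s)` as `ρ → ∞`. -/
theorem weakUser_effectiveRate_highSNR_limit {S : Type*} [MeasurableSpace S] (P : Measure S)
    [IsProbabilityMeasure P] (ν : ℝ) (hν : 0 < ν)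
    (as : ℝ) (has : 0 < as) (has1 : as < 1)
    (g : S → ℝ) (hm : Measurable g) (hpos : ∀ᵐ ω ∂P, 0 < g ω) :
    Tendsto (fun ρ : ℝ => -(1 / ν) * Real.logb 2
        (∫ ω, ((1 + ρ * g ω) / (1 + as * ρ * g ω)) ^ (-ν) ∂P))
      atTop (nhds (Real.logb 2 (1 + (1 - as) / as))) := by
  have hasne : as ≠ 0 := ne_of_gt has
  -- Step 1: the integral tends to as ^ ν
  have hint : Tendsto (fun ρ : ℝ => ∫ ω, ((1 + ρ * g ω) / (1 + as * ρ * g ω)) ^ (-ν) ∂P)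
      atTop (nhds (as ^ ν)) := by
    have h1 : ∫ _ω : S, (as : ℝ) ^ ν ∂P = as ^ ν := by simp
    rw [← h1]
    apply tendsto_integral_filter_of_dominated_convergence (fun _ => (1 : ℝ))
    · filter_upwards with ρ
      apply Measurable.aestronglyMeasurable
      fun_prop
    · filter_upwards [eventually_ge_atTop (0 : ℝ)] with ρ hρ
      filter_upwards [hpos] with ω hω
      have hg : 0 ≤ g ω := hω.le
      have hden : 0 < 1 + as * ρ * g ω := by positivity
      have hratio : 1 ≤ (1 + ρ * g ω) / (1 + as * ρ * g ω) := by
        rw [le_div_iff₀ hden]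
        nlinarith [mul_nonneg (mul_nonneg hρ hg) (sub_nonneg.mpr has1.le)]
      have h0 : (0:ℝ) < (1 + ρ * g ω) / (1 + as * ρ * g ω) := lt_of_lt_of_le one_pos hratio
      rw [Real.norm_eq_abs, abs_of_nonneg (Real.rpow_nonneg h0.le _)]
      exact Real.rpow_le_one_of_one_le_of_nonpos hratio (neg_nonpos.mpr hν.le)
    · exact integrable_const 1
    · filter_upwards [hpos] with ω hω
      have hgne : g ω ≠ 0 := ne_of_gt hω
      have key : Tendsto (fun ρ : ℝ => (1 / ρ + g ω) / (1 / ρ + as * g ω)) atTop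
          (nhds ((0 + g ω) / (0 + as * g ω))) := by
        have hinv : Tendsto (fun ρ : ℝ => 1 / ρ) atTop (nhds 0) := by
          simpa [one_div] using tendsto_inv_atTop_zero
        exact (hinv.add tendsto_const_nhds).div (hinv.add tendsto_const_nhds)
          (by positivity)
      have hval : (0 + g ω) / (0 + as * g ω) = 1 / as := by
        field_simp
        ring
      rw [hval] at key
      have hlim : Tendsto (fun ρ : ℝ => (1 + ρ * g ω) / (1 + as * ρ * g ω)) atTop
          (nhds (1 / as)) := by
        apply key.congr'
        filter_upwards [eventually_gt_atTop (0 : ℝ)] with ρ hρ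
        have hd1 : (0:ℝ) < 1 / ρ + as * g ω := by positivity
        have hd2 : (0:ℝ) < 1 + as * ρ * g ω := by positivity
        field_simp
      have := hlim.rpow_const (p := -ν) (Or.inl (by positivity))
      have heq : (1 / as : ℝ) ^ (-ν) = as ^ ν := by
        rw [Real.rpow_neg (by positivity), one_div, Real.inv_rpow has.le, inv_inv]
      rwa [heq] at this
  -- Step 2: compose with the continuous function
  have hcont : ContinuousAt (fun x : ℝ => -(1 / ν) * Real.logb 2 x) (as ^ ν) :=
    (Real.continuousAt_logb (by positivity)).const_mul _
  have hfinal := hcont.tendsto.comp hint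
  have hval2 : -(1 / ν) * Real.logb 2 (as ^ ν) = Real.logb 2 (1 + (1 - as) / as) := by
    have h3 : (1:ℝ) + (1 - as) / as = 1 / as := by field_simp; ring
    rw [h3, show (1/as:ℝ) = as⁻¹ from one_div as, Real.logb, Real.logb,
      Real.log_rpow has, Real.log_inv]
    field_simp
  rw [← hval2]
  exact hfinal
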